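/- Fix positive integers m₁, m₂, s₁, s₂. Let L, I₀, K₀, N be finitely supported functions ℤ×ℤ → ℝ with K₀ in the simplex S and supported in the m₁×m₂ grid, and set B = I₀⊗K₀ + N with ‖L⊗N‖_F ≤ ε for some ε ≥ 0. Let (κ_i)_{i=1,…,s₁s₂} be functions supported in the s₁×s₂ grid with ‖κ_i‖_F = 1 for every i, set σ_i = ‖(L⊗B)⊗κ_i‖_F, assume σ_i > 0 for all i, and let σ_min = min_i σ_i. Suppose τ > 0 satisfies ‖(L⊗I₀)⊗X‖_F ≥ τ·‖X‖_F for every X supported in the (m₁+s₁−1)×(m₂+s₂−1) grid. Then the regularizer h(K) = ∑_{i=1}^{s₁s₂} ‖K⊗κ_i‖_F²/σ_i² satisfies h(K₀) ≤ s₁s₂·(1 + √(s₁s₂)·ε/σ_min)² / τ². -/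

import Mathlib

/-- Images, kernels, and filters: finitely supported functions `ℤ × ℤ → ℝ`. -/
abbrev Img := (ℤ × ℤ) →₀ ℝ

/-- Discrete 2D convolution: `(X ⊗ Y)(i,j) = ∑_{(u,v)} X((i,j)-(u,v)) * Y(u,v)`. -/
noncomputable def conv (X Y : Img) : Img :=
  X.sum fun a xa => Y.sum fun b yb => Finsupp.single (a + b) (xa * yb)

/-- Frobenius norm `‖X‖_F = √(∑ X(i,j)²)`. -/
noncomputable def frob (X : Img) : ℝ := Real.sqrt (X.sum fun _ c => c ^ 2)

/-- Inner product `⟨X, Y⟩ = ∑ X(i,j) * Y(i,j)`. -/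
noncomputable def inner2 (X Y : Img) : ℝ := X.sum fun p c => c * Y p

/-- ℓ¹ norm `‖X‖₁ = ∑ |X(i,j)|`. -/
noncomputable def l1 (X : Img) : ℝ := X.sum fun _ c => |c|

/-- The simplex `S` of blur kernels: nonnegative entries summing to one. -/
def InSimplex (K : Img) : Prop := (∀ p, 0 ≤ K p) ∧ (K.sum fun _ c => c) = 1

/-- `X` is supported in the `a × b` grid `{0,…,a-1} × {0,…,b-1}`. -/
def SuppIn (a b : ℕ) (X : Img) : Prop :=
  ∀ p : ℤ × ℤ, ¬(0 ≤ p.1 ∧ p.1 < (a : ℤ) ∧ 0 ≤ p.2 ∧ p.2 < (b : ℤ)) → X p = 0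

abbrev AMA := AddMonoidAlgebra ℝ (ℤ × ℤ)

lemma conv_eq_mul (X Y : Img) :
    conv X Y = ((AddMonoidAlgebra.ofCoeff X : AMA) * AddMonoidAlgebra.ofCoeff Y).coeff := by
  rw [AddMonoidAlgebra.mul_def]
  simp only [AddMonoidAlgebra.coeff_finsuppSum, AddMonoidAlgebra.coeff_single]
  rfl

lemma conv_assoc (X Y Z : Img) : conv (conv X Y) Z = conv X (conv Y Z) := by
  simp only [conv_eq_mul, AddMonoidAlgebra.ofCoeff_coeff, mul_assoc]

lemma conv_add_left (X Y Z : Img) : conv X (Y + Z) = conv X Y + conv X Z := by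
  simp only [conv_eq_mul, AddMonoidAlgebra.ofCoeff_add, mul_add, AddMonoidAlgebra.coeff_add]

lemma conv_add_right (X Y Z : Img) : conv (X + Y) Z = conv X Z + conv Y Z := by
  simp only [conv_eq_mul, AddMonoidAlgebra.ofCoeff_add, add_mul, AddMonoidAlgebra.coeff_add]

lemma finsupp_sum_subset {g : ℝ → ℝ} (hg : g 0 = 0) (X : Img) (s : Finset (ℤ × ℤ))
    (h : X.support ⊆ s) : (X.sum fun _ c => g c) = ∑ p ∈ s, g (X p) := by
  rw [Finsupp.sum]
  exact Finset.sum_subset h fun p _ hp => by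
    rw [Finsupp.notMem_support_iff.mp hp, hg]

noncomputable def eucl (s : Finset (ℤ × ℤ)) (X : Img) : EuclideanSpace ℝ s := WithLp.toLp 2 (fun p => X p)

lemma frob_eq_norm (s : Finset (ℤ × ℤ)) (X : Img) (h : X.support ⊆ s) :
    frob X = ‖eucl s X‖ := by
  rw [frob, EuclideanSpace.norm_eq,
    finsupp_sum_subset (by norm_num) X s h, ← Finset.sum_coe_sort s fun p => X p ^ 2]
  congr 1
  exact Finset.sum_congr rfl fun p _ => by
    rw [Real.norm_eq_abs, sq_abs]; rfl

lemma frob_nonneg (X : Img) : 0 ≤ frob X := Real.sqrt_nonneg _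

lemma frob_sq (X : Img) : frob X ^ 2 = X.sum fun _ c => c ^ 2 := by
  rw [frob, Real.sq_sqrt]
  exact Finset.sum_nonneg fun p _ => sq_nonneg _

lemma frob_zero : frob (0 : Img) = 0 := by simp [frob]

lemma frob_add_le (X Y : Img) : frob (X + Y) ≤ frob X + frob Y := by
  set s := X.support ∪ Y.support ∪ (X + Y).support with hs
  rw [frob_eq_norm s X (Finset.subset_union_left.trans Finset.subset_union_left),
    frob_eq_norm s Y (Finset.subset_union_right.trans Finset.subset_union_left),
    frob_eq_norm s (X + Y) Finset.subset_union_right]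
  have : eucl s (X + Y) = eucl s X + eucl s Y := by
    ext p; simp [eucl]
  rw [this]
  exact norm_add_le _ _

lemma frob_neg (X : Img) : frob (-X) = frob X := by
  unfold frob
  congr 1
  rw [finsupp_sum_subset (by norm_num) (-X) X.support (by simp),
    finsupp_sum_subset (by norm_num) X X.support subset_rfl]
  exact Finset.sum_congr rfl fun p _ => by simp

lemma frob_sub_le (X Y : Img) : frob (X - Y) ≤ frob X + frob Y := by
  rw [sub_eq_add_neg]
  exact (frob_add_le _ _).trans (by rw [frob_neg])

lemma frob_sum_le {ι : Type*} (t : Finset ι) (F : ι → Img) :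
    frob (∑ i ∈ t, F i) ≤ ∑ i ∈ t, frob (F i) := by
  induction t using Finset.cons_induction with
  | empty => simp [frob_zero]
  | cons a t ha ih =>
    rw [Finset.sum_cons, Finset.sum_cons]
    exact (frob_add_le _ _).trans (by linarith)

lemma frob_smul (c : ℝ) (X : Img) : frob (c • X) = |c| * frob X := by
  unfold frob
  rw [finsupp_sum_subset (by norm_num) (c • X) X.support Finsupp.support_smul,
    finsupp_sum_subset (by norm_num) X X.support subset_rfl]
  have : ∑ p ∈ X.support, (c • X) p ^ 2 = c ^ 2 * ∑ p ∈ X.support, X p ^ 2 := by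
    rw [Finset.mul_sum]
    exact Finset.sum_congr rfl fun p _ => by
      rw [Finsupp.smul_apply, smul_eq_mul]; ring
  rw [this, Real.sqrt_mul (sq_nonneg c), Real.sqrt_sq_eq_abs]

lemma frob_mapDomain (b : ℤ × ℤ) (X : Img) :
    frob (Finsupp.mapDomain (· + b) X) = frob X := by
  unfold frob
  congr 1
  have he : Finsupp.mapDomain (· + b) X
      = Finsupp.embDomain ⟨(· + b), add_left_injective b⟩ X :=
    by exact (Finsupp.embDomain_eq_mapDomain ⟨(· + b), add_left_injective b⟩ X).symm
  rw [he, Finsupp.sum_embDomain]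

lemma sum_single_shift (X : Img) (b : ℤ × ℤ) (c : ℝ) :
    (X.sum fun a xa => Finsupp.single (a + b) (xa * c)) = c • Finsupp.mapDomain (· + b) X := by
  rw [Finsupp.mapDomain, Finsupp.smul_sum]
  exact Finsupp.sum_congr fun a _ => by rw [Finsupp.smul_single, smul_eq_mul, mul_comm]

lemma conv_eq_sum (X Y : Img) :
    conv X Y = Y.sum fun b yb => yb • Finsupp.mapDomain (· + b) X := by
  unfold conv
  simp only [Finsupp.sum]
  rw [Finset.sum_comm]
  refine Finset.sum_congr rfl fun b _ => ?_
  have := sum_single_shift X b (Y b)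
  simp only [Finsupp.sum] at this
  exact this

lemma l1_nonneg (X : Img) : 0 ≤ l1 X :=
  Finset.sum_nonneg fun p _ => abs_nonneg _

lemma frob_conv_le (X Y : Img) : frob (conv X Y) ≤ frob X * l1 Y := by
  rw [conv_eq_sum]
  calc frob (Y.sum fun b yb => yb • Finsupp.mapDomain (· + b) X)
      ≤ ∑ b ∈ Y.support, frob (Y b • Finsupp.mapDomain (· + b) X) :=
        frob_sum_le Y.support fun b => Y b • Finsupp.mapDomain (· + b) X
    _ = ∑ b ∈ Y.support, |Y b| * frob X :=
        Finset.sum_congr rfl fun b _ => by rw [frob_smul, frob_mapDomain]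
    _ = frob X * l1 Y := by
        rw [l1, Finsupp.sum, Finset.mul_sum]
        exact Finset.sum_congr rfl fun b _ => mul_comm _ _

lemma l1_le_sqrt_mul_frob (s₁ s₂ : ℕ) (κ : Img) (h : SuppIn s₁ s₂ κ) :
    l1 κ ≤ Real.sqrt ((s₁ : ℝ) * (s₂ : ℝ)) * frob κ := by
  set g : Finset (ℤ × ℤ) := Finset.Ico (0 : ℤ) (s₁ : ℤ) ×ˢ Finset.Ico (0 : ℤ) (s₂ : ℤ) with hg
  have hsub : κ.support ⊆ g := by
    intro p hp
    by_contra hpg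
    refine Finsupp.mem_support_iff.mp hp (h p ?_)
    intro hcond
    exact hpg (by
      rw [hg, Finset.mem_product, Finset.mem_Ico, Finset.mem_Ico]
      exact ⟨⟨hcond.1, hcond.2.1⟩, ⟨hcond.2.2.1, hcond.2.2.2⟩⟩)
  have hcard : (g.card : ℝ) = (s₁ : ℝ) * (s₂ : ℝ) := by
    rw [hg, Finset.card_product, Int.card_Ico, Int.card_Ico]
    push_cast
    simp
  have h1 : l1 κ = ∑ p ∈ g, |κ p| := finsupp_sum_subset (by norm_num) κ g hsub
  have h2 : (l1 κ) ^ 2 ≤ frob κ ^ 2 * ((s₁ : ℝ) * (s₂ : ℝ)) := by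
    rw [h1, frob_sq, finsupp_sum_subset (by norm_num) κ g hsub, ← hcard]
    have := Finset.sum_mul_sq_le_sq_mul_sq g (fun p => |κ p|) (fun _ => 1)
    simpa [sq_abs] using this
  have h3 : l1 κ ≤ Real.sqrt (frob κ ^ 2 * ((s₁ : ℝ) * (s₂ : ℝ))) := by
    rw [← Real.sqrt_sq (l1_nonneg κ)]
    exact Real.sqrt_le_sqrt h2
  calc l1 κ ≤ Real.sqrt (frob κ ^ 2 * ((s₁ : ℝ) * (s₂ : ℝ))) := h3
    _ = Real.sqrt ((s₁ : ℝ) * (s₂ : ℝ)) * frob κ := by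
        rw [Real.sqrt_mul (sq_nonneg _), Real.sqrt_sq (frob_nonneg κ), mul_comm]

lemma conv_suppIn {a b c d : ℕ} (ha : 0 < a) (hb : 0 < b) (hc : 0 < c) (hd : 0 < d)
    (X Y : Img) (hX : SuppIn a b X) (hY : SuppIn c d Y) :
    SuppIn (a + c - 1) (b + d - 1) (conv X Y) := by
  classical
  intro p hp
  by_contra hne
  have hp' : p ∈ (conv X Y).support := Finsupp.mem_support_iff.mpr hne
  rw [conv_eq_mul] at hp'
  have hmem := AddMonoidAlgebra.support_coeff_mul_subset (AddMonoidAlgebra.ofCoeff X : AMA) (AddMonoidAlgebra.ofCoeff Y) hp'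
  rw [Finset.mem_add] at hmem
  obtain ⟨u, hu, v, hv, huv⟩ := hmem
  have hXu : 0 ≤ u.1 ∧ u.1 < (a : ℤ) ∧ 0 ≤ u.2 ∧ u.2 < (b : ℤ) := by
    by_contra hcon
    exact Finsupp.mem_support_iff.mp hu (hX u hcon)
  have hYv : 0 ≤ v.1 ∧ v.1 < (c : ℤ) ∧ 0 ≤ v.2 ∧ v.2 < (d : ℤ) := by
    by_contra hcon
    exact Finsupp.mem_support_iff.mp hv (hY v hcon)
  apply hp
  have h1 : p.1 = u.1 + v.1 := by rw [← huv]; rfl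
  have h2 : p.2 = u.2 + v.2 := by rw [← huv]; rfl
  have hca : ((a + c - 1 : ℕ) : ℤ) = (a : ℤ) + c - 1 := by omega
  have hcb : ((b + d - 1 : ℕ) : ℤ) = (b : ℤ) + d - 1 := by omega
  rw [hca, hcb]
  omega

/-- Noisy bound on the regularizer at the true kernel:
`h(K₀) ≤ s₁s₂ (1 + √(s₁s₂) ε / σ_min)² / τ²`. -/
theorem regularizer_at_true_kernel_noisy (m₁ m₂ s₁ s₂ : ℕ)
    (hm₁ : 0 < m₁) (hm₂ : 0 < m₂) (hs₁ : 0 < s₁) (hs₂ : 0 < s₂)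
    (L I₀ K₀ N B : Img) (hK₀ : InSimplex K₀) (hK₀supp : SuppIn m₁ m₂ K₀)
    (hB : B = conv I₀ K₀ + N)
    (ε : ℝ) (hε : 0 ≤ ε) (hN : frob (conv L N) ≤ ε)
    (κ : Fin (s₁ * s₂) → Img) (hκsupp : ∀ i, SuppIn s₁ s₂ (κ i))
    (hκnorm : ∀ i, frob (κ i) = 1)
    (σ : Fin (s₁ * s₂) → ℝ) (hσ : ∀ i, σ i = frob (conv (conv L B) (κ i)))
    (hσpos : ∀ i, 0 < σ i)
    (σmin : ℝ) (hσmin : IsLeast (Set.range σ) σmin)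
    (τ : ℝ) (hτ : 0 < τ)
    (hsharp : ∀ X : Img, SuppIn (m₁ + s₁ - 1) (m₂ + s₂ - 1) X →
      τ * frob X ≤ frob (conv (conv L I₀) X)) :
    ∑ i, frob (conv K₀ (κ i)) ^ 2 / (σ i) ^ 2 ≤
      (s₁ : ℝ) * (s₂ : ℝ) * (1 + Real.sqrt ((s₁ : ℝ) * (s₂ : ℝ)) * ε / σmin) ^ 2 / τ ^ 2 := by
  obtain ⟨hmem, hlb⟩ := hσmin
  obtain ⟨j, hj⟩ := hmem
  have hσminpos : 0 < σmin := hj ▸ hσpos j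
  set c : ℝ := Real.sqrt ((s₁ : ℝ) * (s₂ : ℝ)) * ε with hc
  have hc0 : 0 ≤ c := mul_nonneg (Real.sqrt_nonneg _) hε
  have key : ∀ i, frob (conv K₀ (κ i)) ^ 2 / σ i ^ 2 ≤ (1 + c / σmin) ^ 2 / τ ^ 2 := by
    intro i
    set u : ℝ := frob (conv K₀ (κ i)) with hu
    have hu0 : 0 ≤ u := frob_nonneg _
    have hσi : 0 < σ i := hσpos i
    have hle : σmin ≤ σ i := hlb ⟨i, rfl⟩
    have hsupp : SuppIn (m₁ + s₁ - 1) (m₂ + s₂ - 1) (conv K₀ (κ i)) :=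
      conv_suppIn hm₁ hm₂ hs₁ hs₂ K₀ (κ i) hK₀supp (hκsupp i)
    have h1 : τ * u ≤ frob (conv (conv L I₀) (conv K₀ (κ i))) := hsharp _ hsupp
    have h2 : conv (conv L B) (κ i)
        = conv (conv L I₀) (conv K₀ (κ i)) + conv (conv L N) (κ i) := by
      rw [hB, conv_add_left L (conv I₀ K₀) N, conv_add_right]
      congr 1
      rw [← conv_assoc L I₀ K₀]
      exact conv_assoc (conv L I₀) K₀ (κ i)
    have h3 : frob (conv (conv L I₀) (conv K₀ (κ i))) ≤ σ i + c := by
      have heq : conv (conv L I₀) (conv K₀ (κ i))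
          = conv (conv L B) (κ i) - conv (conv L N) (κ i) :=
        eq_sub_of_add_eq h2.symm
      have hnoise : frob (conv (conv L N) (κ i)) ≤ c := by
        have ha := frob_conv_le (conv L N) (κ i)
        have hb' := l1_le_sqrt_mul_frob s₁ s₂ (κ i) (hκsupp i)
        rw [hκnorm i, mul_one] at hb'
        calc frob (conv (conv L N) (κ i)) ≤ frob (conv L N) * l1 (κ i) := ha
          _ ≤ ε * Real.sqrt ((s₁ : ℝ) * (s₂ : ℝ)) :=
              mul_le_mul hN hb' (l1_nonneg _) hε
          _ = c := by rw [hc]; ring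
      calc frob (conv (conv L I₀) (conv K₀ (κ i)))
          ≤ frob (conv (conv L B) (κ i)) + frob (conv (conv L N) (κ i)) := by
            rw [heq]; exact frob_sub_le _ _
        _ ≤ σ i + c := by rw [← hσ i]; linarith
    have e1 : u / σ i ≤ (1 + c / σmin) / τ := by
      rw [div_le_div_iff₀ hσi hτ]
      have hgs : c ≤ c / σmin * σ i := by
        rw [div_mul_eq_mul_div, le_div_iff₀ hσminpos]
        nlinarith
      nlinarith
    calc u ^ 2 / σ i ^ 2 = (u / σ i) ^ 2 := (div_pow u (σ i) 2).symm
      _ ≤ ((1 + c / σmin) / τ) ^ 2 :=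
          pow_le_pow_left₀ (div_nonneg hu0 hσi.le) e1 2
      _ = (1 + c / σmin) ^ 2 / τ ^ 2 := div_pow _ _ 2
  calc ∑ i, frob (conv K₀ (κ i)) ^ 2 / (σ i) ^ 2
      ≤ ∑ _i : Fin (s₁ * s₂), (1 + c / σmin) ^ 2 / τ ^ 2 :=
        Finset.sum_le_sum fun i _ => key i
    _ = (s₁ : ℝ) * (s₂ : ℝ) * (1 + c / σmin) ^ 2 / τ ^ 2 := by
        rw [Finset.sum_const, Finset.card_univ, Fintype.card_fin, nsmul_eq_mul]
        push_cast
        ring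
    _ = (s₁ : ℝ) * (s₂ : ℝ) * (1 + Real.sqrt ((s₁ : ℝ) * (s₂ : ℝ)) * ε / σmin) ^ 2 / τ ^ 2 := by
        rw [hc]
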